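/- Consider a sliding sequence σ = ((i_1,j_1),...,(i_m,j_m)) of index pairs with consecutive differences in {(1,0),(0,1)}, and maintain for each pair the visibility core core(i-1, j+1), the intersection of the left half-planes of the polygon edges indexed from i-1 to j+1. During a traversal of σ, each point of the plane appears as a vertex of the visibility core in at most one contiguous time interval. -/

import Mathlib

open Set

noncomputable section

abbrev Pt := ℝ × ℝ

def dotp (a p : Pt) : ℝ := a.1 * p.1 + a.2 * p.2

lemma dotp_smul_add (a : Pt) (s t : ℝ) (x y : Pt) :
    dotp a (s • x + t • y) = s * dotp a x + t * dotp a y := by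
  simp [dotp, Prod.smul_def, smul_eq_mul]; ring

/-- If `p` lies in the intersection of half-planes and two of the constraints are tight
with independent normals, then `p` is an extreme point. -/
lemma extreme_of_two (S : Finset ℕ) (a : ℕ → Pt) (c : ℕ → ℝ) (p : Pt)
    (hp : ∀ k ∈ S, dotp (a k) p ≤ c k)
    (k l : ℕ) (hk : k ∈ S) (hl : l ∈ S)
    (hkt : dotp (a k) p = c k) (hlt : dotp (a l) p = c l)
    (hcross : (a k).1 * (a l).2 - (a k).2 * (a l).1 ≠ 0) :
    p ∈ Set.extremePoints ℝ (⋂ i ∈ S, {q : Pt | dotp (a i) q ≤ c i}) := by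
  constructor
  · exact Set.mem_iInter₂.mpr fun i hi => hp i hi
  · rintro x hx y hy hseg
    obtain ⟨s, t, hs, ht, hst, hxy⟩ := hseg
    have hx' : ∀ i ∈ S, dotp (a i) x ≤ c i := fun i hi => Set.mem_iInter₂.mp hx i hi
    have hy' : ∀ i ∈ S, dotp (a i) y ≤ c i := fun i hi => Set.mem_iInter₂.mp hy i hi
    have key : ∀ i ∈ S, dotp (a i) p = c i → dotp (a i) x = c i ∧ dotp (a i) y = c i := by
      intro i hi hit
      have h1 : s * dotp (a i) x + t * dotp (a i) y = c i := by
        rw [← hit, ← hxy, dotp_smul_add]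
      have hx2 := hx' i hi
      have hy2 := hy' i hi
      have hxc : s * dotp (a i) x ≤ s * c i := mul_le_mul_of_nonneg_left hx2 hs.le
      have hyc : t * dotp (a i) y ≤ t * c i := mul_le_mul_of_nonneg_left hy2 ht.le
      have hcc : s * c i + t * c i = c i := by linear_combination c i * hst
      have ex : s * dotp (a i) x = s * c i := by linarith
      have ey : t * dotp (a i) y = t * c i := by linarith
      exact ⟨mul_left_cancel₀ hs.ne' ex, mul_left_cancel₀ ht.ne' ey⟩
    obtain ⟨hxk, hyk⟩ := key k hk hkt
    obtain ⟨hxl, hyl⟩ := key l hl hlt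
    have uniq : ∀ z : Pt, dotp (a k) z = c k → dotp (a l) z = c l → z = p := by
      intro z h1 h2
      have e1 : (a k).1 * (z.1 - p.1) + (a k).2 * (z.2 - p.2) = 0 := by
        simp only [dotp] at h1 hkt; linarith
      have e2 : (a l).1 * (z.1 - p.1) + (a l).2 * (z.2 - p.2) = 0 := by
        simp only [dotp] at h2 hlt; linarith
      have h31 : ((a k).1 * (a l).2 - (a k).2 * (a l).1) * (z.1 - p.1) = 0 := by
        linear_combination (a l).2 * e1 - (a k).2 * e2
      have h32 : ((a k).1 * (a l).2 - (a k).2 * (a l).1) * (z.2 - p.2) = 0 := by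
        linear_combination (a k).1 * e2 - (a l).1 * e1
      have u1 : z.1 = p.1 := by
        rcases mul_eq_zero.mp h31 with h | h
        · exact absurd h hcross
        · linarith
      have u2 : z.2 = p.2 := by
        rcases mul_eq_zero.mp h32 with h | h
        · exact absurd h hcross
        · linarith
      exact Prod.ext u1 u2
    exact uniq x hxk hxl

/-- Conversely, an extreme point of the intersection of half-planes has two tight
constraints with independent normals. -/
lemma two_of_extreme (S : Finset ℕ) (a : ℕ → Pt) (c : ℕ → ℝ) (p : Pt)
    (ha : ∀ k, a k ≠ 0)
    (hp : p ∈ Set.extremePoints ℝ (⋂ i ∈ S, {q : Pt | dotp (a i) q ≤ c i})) :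
    ∃ k ∈ S, ∃ l ∈ S, k ≠ l ∧ dotp (a k) p = c k ∧ dotp (a l) p = c l ∧
      (a k).1 * (a l).2 - (a k).2 * (a l).1 ≠ 0 := by
  by_contra hcon
  push_neg at hcon
  obtain ⟨hpK, hext⟩ := hp
  have hpK' : ∀ i ∈ S, dotp (a i) p ≤ c i := fun i hi => Set.mem_iInter₂.mp hpK i hi
  have hv : ∃ v : Pt, v ≠ 0 ∧ ∀ k ∈ S, dotp (a k) p = c k → dotp (a k) v = 0 := by
    by_cases hT : ∃ k0 ∈ S, dotp (a k0) p = c k0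
    · obtain ⟨k0, hk0, ht0⟩ := hT
      refine ⟨(-(a k0).2, (a k0).1), ?_, ?_⟩
      · intro h
        rw [Prod.ext_iff] at h
        simp only [Prod.fst_zero, Prod.snd_zero, neg_eq_zero] at h
        apply ha k0
        rw [Prod.ext_iff]
        exact ⟨by simpa using h.2, by simpa using h.1⟩
      · intro l hl htl
        by_cases hlk : l = k0
        · subst hlk; simp only [dotp]; ring
        · have hzero := hcon k0 hk0 l hl (Ne.symm hlk) ht0 htl
          simp only [dotp]
          linear_combination hzero
    · push_neg at hT
      exact ⟨(1, 0), by simp [Prod.ext_iff], fun k hk ht => absurd ht (hT k hk)⟩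
  obtain ⟨v, hv0, hvort⟩ := hv
  classical
  set S' := S.filter (fun k => dotp (a k) p ≠ c k) with hS'
  set f : ℕ → ℝ := fun k => (c k - dotp (a k) p) / (|dotp (a k) v| + 1) with hf
  have hfpos : ∀ k ∈ S', 0 < f k := by
    intro k hk
    rw [hS', Finset.mem_filter] at hk
    have h1 := hpK' k hk.1
    have h2 : dotp (a k) p < c k := lt_of_le_of_ne h1 hk.2
    have h3 : (0:ℝ) < |dotp (a k) v| + 1 := by positivity
    exact div_pos (by linarith) h3
  have hex : ∃ ε : ℝ, 0 < ε ∧ ∀ k ∈ S', ε ≤ f k := by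
    have hEne : (insert (1:ℝ) (S'.image f)).Nonempty := ⟨1, Finset.mem_insert_self _ _⟩
    refine ⟨(insert (1:ℝ) (S'.image f)).min' hEne, ?_, ?_⟩
    · have hmem := (insert (1:ℝ) (S'.image f)).min'_mem hEne
      rcases Finset.mem_insert.mp hmem with h | h
      · rw [h]; norm_num
      · obtain ⟨k, hk, hfk⟩ := Finset.mem_image.mp h
        rw [← hfk]; exact hfpos k hk
    · intro k hk
      exact Finset.min'_le _ _ (Finset.mem_insert_of_mem (Finset.mem_image_of_mem f hk))
  obtain ⟨ε, hε, hεle⟩ := hex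
  have key : ∀ e : ℝ, |e| ≤ ε →
      (p + e • v) ∈ ⋂ i ∈ S, {q : Pt | dotp (a i) q ≤ c i} := by
    intro e he
    refine Set.mem_iInter₂.mpr fun k hk => ?_
    have hd : dotp (a k) (p + e • v) = dotp (a k) p + e * dotp (a k) v := by
      simp [dotp, Prod.smul_def, smul_eq_mul]; ring
    by_cases ht : dotp (a k) p = c k
    · have hz := hvort k hk ht
      simp only [Set.mem_setOf_eq]
      rw [hd, hz, mul_zero, add_zero, ht]
    · have hkS' : k ∈ S' := Finset.mem_filter.mpr ⟨hk, ht⟩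
      have h1 : ε ≤ f k := hεle k hkS'
      have habs : (0:ℝ) ≤ |dotp (a k) v| := abs_nonneg _
      have habse : (0:ℝ) ≤ |e| := abs_nonneg _
      have h2 : e * dotp (a k) v ≤ c k - dotp (a k) p := by
        have c1 : e * dotp (a k) v ≤ |e| * |dotp (a k) v| := by
          calc e * dotp (a k) v ≤ |e * dotp (a k) v| := le_abs_self _
            _ = |e| * |dotp (a k) v| := abs_mul _ _
        have c2 : |e| * |dotp (a k) v| ≤ ε * (|dotp (a k) v| + 1) := by nlinarith
        have c3 : ε * (|dotp (a k) v| + 1) ≤ f k * (|dotp (a k) v| + 1) := by nlinarith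
        have c4 : f k * (|dotp (a k) v| + 1) = c k - dotp (a k) p := by
          rw [hf]; field_simp
        linarith
      simp only [Set.mem_setOf_eq]
      rw [hd]; linarith
  have hmem1 := key ε (by rw [abs_of_pos hε])
  have hmem2 := key (-ε) (by rw [abs_neg, abs_of_pos hε])
  have hseg : p ∈ openSegment ℝ (p + ε • v) (p + (-ε) • v) := by
    refine ⟨1/2, 1/2, by norm_num, by norm_num, by norm_num, ?_⟩
    module
  have hres := hext hmem1 hmem2 hseg
  have h3 : ε • v = 0 := add_eq_left.mp hres
  rcases smul_eq_zero.mp h3 with h | h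
  · exact hε.ne' h
  · exact hv0 h

theorem stmt6 (a : ℕ → Pt) (c : ℕ → ℝ)
    (ha : ∀ k, a k ≠ 0)
    (hgen : ∀ k l k', k ≠ l → l ≠ k' → k ≠ k' →
      ∀ p : Pt, dotp (a k) p = c k → dotp (a l) p = c l → dotp (a k') p ≠ c k')
    (m : ℕ) (I J : ℕ → ℕ)
    (hstep : ∀ t < m, (I (t+1) = I t + 1 ∧ J (t+1) = J t) ∨
                      (I (t+1) = I t ∧ J (t+1) = J t + 1))
    (hI1 : ∀ t, 1 ≤ I t) (hIJ : ∀ t, I t ≤ J t)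
    (p : Pt) (t1 t2 t3 : ℕ) (h12 : t1 ≤ t2) (h23 : t2 ≤ t3) (h3m : t3 ≤ m)
    (h1 : p ∈ Set.extremePoints ℝ
      (⋂ k ∈ Finset.Icc (I t1 - 1) (J t1 + 1), {q : Pt | dotp (a k) q ≤ c k}))
    (h3 : p ∈ Set.extremePoints ℝ
      (⋂ k ∈ Finset.Icc (I t3 - 1) (J t3 + 1), {q : Pt | dotp (a k) q ≤ c k})) :
    p ∈ Set.extremePoints ℝ
      (⋂ k ∈ Finset.Icc (I t2 - 1) (J t2 + 1), {q : Pt | dotp (a k) q ≤ c k}) := by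
  -- monotonicity of the window endpoints
  have mono : ∀ s t, s ≤ t → t ≤ m → I s ≤ I t ∧ J s ≤ J t := by
    intro s t hst htm
    induction t with
    | zero =>
      have hs0 : s = 0 := Nat.le_zero.mp hst
      subst hs0; exact ⟨le_rfl, le_rfl⟩
    | succ n ih =>
      rcases Nat.lt_or_ge s (n+1) with h | h
      · have hs' : s ≤ n := Nat.lt_succ_iff.mp h
        have hn : n ≤ m := le_trans (Nat.le_succ n) htm
        obtain ⟨hI', hJ'⟩ := ih hs' hn
        have hstep' := hstep n (by omega)
        rcases hstep' with ⟨e1, e2⟩ | ⟨e1, e2⟩ <;> exact ⟨by omega, by omega⟩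
      · have hsn : s = n+1 := le_antisymm hst h
        subst hsn; exact ⟨le_rfl, le_rfl⟩
  obtain ⟨k0, hk0, l0, hl0, hkl0, htk0, htl0, hc0⟩ := two_of_extreme _ a c p ha h1
  obtain ⟨k1, hk1, l1, hl1, hkl1, htk1, htl1, hc1⟩ := two_of_extreme _ a c p ha h3
  -- the tight pair is the same at t3
  have hk1m : k1 = k0 ∨ k1 = l0 := by
    by_contra h
    push_neg at h
    exact hgen k0 l0 k1 hkl0 (Ne.symm h.2) (Ne.symm h.1) p htk0 htl0 htk1
  have hl1m : l1 = k0 ∨ l1 = l0 := by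
    by_contra h
    push_neg at h
    exact hgen k0 l0 l1 hkl0 (Ne.symm h.2) (Ne.symm h.1) p htk0 htl0 htl1
  have hW3 : k0 ∈ Finset.Icc (I t3 - 1) (J t3 + 1) ∧
      l0 ∈ Finset.Icc (I t3 - 1) (J t3 + 1) := by
    rcases hk1m with h | h <;> rcases hl1m with h' | h'
    · subst h; subst h'; exact absurd rfl hkl1
    · subst h; subst h'; exact ⟨hk1, hl1⟩
    · subst h; subst h'; exact ⟨hl1, hk1⟩
    · subst h; subst h'; exact absurd rfl hkl1
  obtain ⟨hk0W3, hl0W3⟩ := hW3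
  have hm12 := mono t1 t2 h12 (le_trans h23 h3m)
  have hm23 := mono t2 t3 h23 h3m
  rw [Finset.mem_Icc] at hk0 hl0 hk0W3 hl0W3
  have hI1t2 := hI1 t2
  have hI1t3 := hI1 t3
  have hI1t1 := hI1 t1
  -- memberships in the middle window
  have hk0W2 : k0 ∈ Finset.Icc (I t2 - 1) (J t2 + 1) := by
    rw [Finset.mem_Icc]; omega
  have hl0W2 : l0 ∈ Finset.Icc (I t2 - 1) (J t2 + 1) := by
    rw [Finset.mem_Icc]; omega
  -- p satisfies all constraints of the middle window
  have hpK1 : ∀ i ∈ Finset.Icc (I t1 - 1) (J t1 + 1), dotp (a i) p ≤ c i :=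
    fun i hi => Set.mem_iInter₂.mp h1.1 i hi
  have hpK3 : ∀ i ∈ Finset.Icc (I t3 - 1) (J t3 + 1), dotp (a i) p ≤ c i :=
    fun i hi => Set.mem_iInter₂.mp h3.1 i hi
  have hpK2 : ∀ k ∈ Finset.Icc (I t2 - 1) (J t2 + 1), dotp (a k) p ≤ c k := by
    intro k hk
    rw [Finset.mem_Icc] at hk
    rcases le_or_gt k (J t1 + 1) with h | h
    · exact hpK1 k (by rw [Finset.mem_Icc]; omega)
    · exact hpK3 k (by rw [Finset.mem_Icc]; omega)
  exact extreme_of_two _ a c p hpK2 k0 l0 hk0W2 hl0W2 htk0 htl0 hc0
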